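/- For φ ∈ [−π/2, 0], define λ(φ) = (2 cos φ + 2 cos φ sin φ)/8 and λ'(φ) = (−2 sin φ + 2 cos 2φ)/8, and set ṡ(φ) = 2λ(φ)·cos φ − λ'(φ)·sin φ and ν̇(φ) = 2λ(φ)·sin φ + λ'(φ)·cos φ. Then for every φ ∈ [−π/2, 0] one has ṡ(φ)² − 3·ν̇(φ)² = (cos 2φ − sin φ)² / 16. -/
import Mathlib

open Real

/-- On `φ ∈ [−π/2, 0]`, with `λ(φ) = (2cos φ + 2cos φ sin φ)/8`,
`λ'(φ) = (−2sin φ + 2cos 2φ)/8`, `ṡ = 2λcos φ − λ'sin φ`,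
`ν̇ = 2λsin φ + λ'cos φ`, one has `ṡ² − 3ν̇² = (cos 2φ − sin φ)²/16`. -/
theorem stmt_7 (φ : ℝ) (hφ : φ ∈ Set.Icc (-(π/2)) 0) :
    (2 * ((2 * Real.cos φ + 2 * Real.cos φ * Real.sin φ) / 8) * Real.cos φ
        - ((-2 * Real.sin φ + 2 * Real.cos (2*φ)) / 8) * Real.sin φ)^2
      - 3 * (2 * ((2 * Real.cos φ + 2 * Real.cos φ * Real.sin φ) / 8) * Real.sin φ
        + ((-2 * Real.sin φ + 2 * Real.cos (2*φ)) / 8) * Real.cos φ)^2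
      = (Real.cos (2*φ) - Real.sin φ)^2 / 16 := by
  have h2 : Real.cos (2*φ) = 1 - 2 * Real.sin φ ^ 2 := by
    rw [Real.cos_two_mul' ]
    nlinarith [Real.sin_sq_add_cos_sq φ]
  have hc : Real.cos φ ^ 2 = 1 - Real.sin φ ^ 2 := by
    nlinarith [Real.sin_sq_add_cos_sq φ]
  rw [h2]
  nlinarith [hc, sq_nonneg (Real.sin φ), sq_nonneg (Real.cos φ)]
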